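/- A map f : X → Y between topological spaces is weakly discontinuous if and only if there exist an ordinal β and a family (X_α)_{α ≤ β} of closed subsets of X such that: X_0 = X; X_β = ∅; X_{α'} ⊆ X_α whenever α ≤ α' ≤ β; X_α = ⋂_{γ < α} X_γ for every limit ordinal α ≤ β; X_{α+1} ≠ X_α for every α < β; and for every α < β the set D(f|X_α) of points of X_α at which the restriction f|X_α (with the subspace topology on X_α) is discontinuous is contained in X_{α+1}. -/

import Mathlib

open Set Topology

universe u v

/-- A map `f : X → Y` is *weakly discontinuous* if for every non-empty subset `A ⊆ X`
the set of discontinuity points of the restriction `f|A` is nowhere dense in the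
subspace `A`. -/
def WeaklyDiscontinuous {X Y : Type*} [TopologicalSpace X] [TopologicalSpace Y]
    (f : X → Y) : Prop :=
  ∀ A : Set X, A.Nonempty →
    IsNowhereDense {a : A | ¬ ContinuousWithinAt f A (a : X)}

/-- If `f` is weakly discontinuous and `A` is nonempty, then the closure of the
discontinuity set of `f|A` is not all of `A`. -/
lemma WD.closure_ne {X Y : Type*} [TopologicalSpace X] [TopologicalSpace Y]
    {f : X → Y} (hf : WeaklyDiscontinuous f) {A : Set X} (hA : A.Nonempty) :
    closure {x ∈ A | ¬ ContinuousWithinAt f A x} ≠ A := by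
  intro hclos
  have hND := hf A hA
  set s : Set A := {a : A | ¬ ContinuousWithinAt f A (a : X)} with hs
  have himg : Subtype.val '' s = {x ∈ A | ¬ ContinuousWithinAt f A x} := by
    ext x; constructor
    · rintro ⟨a, ha, rfl⟩; exact ⟨a.2, ha⟩
    · rintro ⟨hx, hnc⟩; exact ⟨⟨x, hx⟩, hnc, rfl⟩
  have hclos' : closure s = (Set.univ : Set A) := by
    rw [IsEmbedding.subtypeVal.closure_eq_preimage_closure_image s, himg, hclos]
    ext a; simp [a.2]
  rw [IsNowhereDense, hclos', interior_univ] at hND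
  obtain ⟨x, hx⟩ := hA
  exact absurd hND (by simp [Set.eq_empty_iff_forall_notMem]; exact ⟨x, hx⟩)

theorem weaklyDiscontinuous_iff_closed_vanishing_series
    {X : Type u} {Y : Type v} [TopologicalSpace X] [TopologicalSpace Y] (f : X → Y) :
    WeaklyDiscontinuous f ↔
      ∃ (β : Ordinal.{u}) (Xs : Ordinal.{u} → Set X),
        (∀ α : Ordinal.{u}, α ≤ β → IsClosed (Xs α)) ∧
        Xs 0 = Set.univ ∧
        Xs β = ∅ ∧
        (∀ α α' : Ordinal.{u}, α ≤ α' → α' ≤ β → Xs α' ⊆ Xs α) ∧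
        (∀ α : Ordinal.{u}, α ≤ β → Order.IsSuccLimit α → Xs α = ⋂ γ < α, Xs γ) ∧
        (∀ α : Ordinal.{u}, α < β → Xs (α + 1) ≠ Xs α) ∧
        (∀ α : Ordinal.{u}, α < β →
          {x ∈ Xs α | ¬ ContinuousWithinAt f (Xs α) x} ⊆ Xs (α + 1)) := by
  constructor
  · intro hf
    -- the derivation operator
    set F : Set X → Set X := fun A => closure {x ∈ A | ¬ ContinuousWithinAt f A x} with hF
    -- transfinite iteration of F
    set g : Ordinal.{u} → Set X := fun o =>
      Ordinal.limitRecOn o Set.univ (fun _ ih => F ih)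
        (fun o _ ih => ⋂ (γ : Ordinal.{u}) (h : γ < o), ih γ h) with hg
    have hg0 : g 0 = Set.univ := Ordinal.limitRecOn_zero _ _ _
    have hgsucc : ∀ o, g (o + 1) = F (g o) := fun o => by
      show g (Order.succ o) = _
      exact Ordinal.limitRecOn_succ _ _ _ _
    have hglim : ∀ o, Order.IsSuccLimit o → g o = ⋂ γ < o, g γ := fun o ho =>
      Ordinal.limitRecOn_limit _ _ _ _ ho
    -- closedness
    have hclosed : ∀ o, IsClosed (g o) := by
      intro o
      induction o using Ordinal.induction with
      | h o ih =>
        rcases Ordinal.zero_or_succ_or_isSuccLimit o with h0 | ⟨a, ha⟩ | hl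
        · rw [h0, hg0]; exact isClosed_univ
        · rw [← ha, ← Ordinal.add_one_eq_succ, hgsucc]; exact isClosed_closure
        · rw [hglim o hl]
          exact isClosed_biInter fun γ hγ => ih γ hγ
    -- succ shrinks
    have hFsub : ∀ o, g (o + 1) ⊆ g o := by
      intro o
      rw [hgsucc]
      have : {x ∈ g o | ¬ ContinuousWithinAt f (g o) x} ⊆ g o := fun x hx => hx.1
      calc F (g o) ⊆ closure (g o) := closure_mono this
        _ = g o := (hclosed o).closure_eq
    -- antitone
    have hanti : ∀ o' o, o ≤ o' → g o' ⊆ g o := by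
      intro o'
      induction o' using Ordinal.induction with
      | h o' ih =>
        intro o ho
        rcases eq_or_lt_of_le ho with rfl | ho
        · exact subset_rfl
        rcases Ordinal.zero_or_succ_or_isSuccLimit o' with h0 | ⟨a, ha⟩ | hl
        · exact absurd ho (by simp [h0])
        · subst ha
          rw [← Ordinal.add_one_eq_succ]
          refine (hFsub a).trans (ih a ?_ o ?_)
          · exact Order.lt_succ a
          · exact Order.lt_succ_iff.mp ho
        · rw [hglim o' hl]
          exact Set.biInter_subset_of_mem ho
    -- existence of an ordinal where g vanishes
    have hvanish : ∃ o, g o = ∅ := by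
      by_contra hno
      push_neg at hno
      have hne : ∀ o, (g o).Nonempty := hno
      have hstrict : ∀ o, g (o + 1) ≠ g o := by
        intro o
        rw [hgsucc]
        exact WD.closure_ne hf (hne o)
      have hinj : Function.Injective g := by
        intro a b hab
        by_contra hne'
        wlog h : a < b generalizing a b
        · exact this hab.symm (Ne.symm hne') ((Ne.lt_or_gt hne').resolve_left h)
        have h1 : g b ⊆ g (a + 1) := hanti b (a + 1) (Order.add_one_le_iff.mpr h)
        have h2 : g (a + 1) = g a :=
          Set.Subset.antisymm (hFsub a) (hab ▸ h1)
        exact hstrict a h2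
      exact not_injective_of_ordinal g hinj
    -- take the least such ordinal
    set β := sInf {o : Ordinal.{u} | g o = ∅} with hβ
    have hβmem : g β = ∅ := csInf_mem (s := {o : Ordinal.{u} | g o = ∅}) hvanish
    have hβleast : ∀ o, o < β → g o ≠ ∅ := by
      intro o ho h
      exact absurd (csInf_le' (show o ∈ {o : Ordinal.{u} | g o = ∅} from h)) (not_le.mpr ho)
    refine ⟨β, g, fun α _ => hclosed α, hg0, hβmem, fun α α' h _ => hanti α' α h,
      fun α _ hl => hglim α hl, ?_, ?_⟩
    · intro α hα
      rw [hgsucc]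
      exact WD.closure_ne hf (Set.nonempty_iff_ne_empty.mpr (hβleast α hα))
    · intro α hα
      rw [hgsucc]
      exact subset_closure
  · rintro ⟨β, Xs, hcl, h0, hβ, hanti, hlim, _, hdisc⟩
    intro A hA
    rw [IsNowhereDense, Set.eq_empty_iff_forall_notMem]
    rintro v hv
    set s : Set A := {a : A | ¬ ContinuousWithinAt f A (a : X)} with hs
    obtain ⟨O₁, hO₁, hO₁eq⟩ := isOpen_induced_iff.mp (isOpen_interior (s := closure s))
    have hvO₁ : (v : X) ∈ O₁ := by rw [← hO₁eq] at hv; exact hv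
    set U : Set X := A ∩ O₁ with hU
    have hUne : U.Nonempty := ⟨v, v.2, hvO₁⟩
    -- the least ordinal α with ¬ U ⊆ Xs α
    set T : Set Ordinal.{u} := {o | ¬ U ⊆ Xs o} with hT
    have hβT : β ∈ T := by
      simp only [hT, Set.mem_setOf_eq, hβ]
      exact fun h => hUne.ne_empty (Set.subset_empty_iff.mp h)
    set α := sInf T with hα
    have hαT : α ∈ T := csInf_mem ⟨β, hβT⟩
    have hαβ : α ≤ β := csInf_le' hβT
    have hless : ∀ o, o < α → U ⊆ Xs o := by
      intro o ho
      by_contra h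
      exact absurd (csInf_le' (show o ∈ T from h)) (not_le.mpr ho)
    -- α is a successor
    have hα0 : α ≠ 0 := by
      intro h
      apply hαT
      rw [h, h0]; exact Set.subset_univ U
    obtain ⟨γ, hγ⟩ : ∃ γ, α = γ + 1 := by
      rcases Ordinal.zero_or_succ_or_isSuccLimit α with h' | ⟨a, ha⟩ | hl
      · exact absurd h' hα0
      · exact ⟨a, by rw [← ha, Ordinal.add_one_eq_succ]⟩
      · exfalso
        apply hαT
        rw [hlim α hαβ hl]
        exact Set.subset_iInter₂ fun γ hγ => hless γ hγ
    have hlt1 : γ < γ + 1 := by rw [Ordinal.add_one_eq_succ]; exact Order.lt_succ γ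
    have hγ1β : γ + 1 ≤ β := hγ ▸ hαβ
    have hγβ : γ < β := lt_of_lt_of_le hlt1 hγ1β
    have hUγ : U ⊆ Xs γ := hless γ (by rw [hγ]; exact hlt1)
    have hUnsub : ¬ U ⊆ Xs (γ + 1) := hγ ▸ hαT
    -- the good open set
    set O : Set X := O₁ ∩ (Xs (γ + 1))ᶜ with hO
    have hOopen : IsOpen O := hO₁.inter (hcl (γ + 1) hγ1β).isOpen_compl
    obtain ⟨u, huU, huN⟩ := not_subset.mp hUnsub
    -- u lies in closure s and in the open set coe ⁻¹' O
    have huC : (⟨u, huU.1⟩ : A) ∈ closure s := interior_subset (by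
      rw [← hO₁eq]; exact huU.2)
    have huV : (⟨u, huU.1⟩ : A) ∈ (Subtype.val ⁻¹' O : Set A) := ⟨huU.2, huN⟩
    obtain ⟨w, hwV, hws⟩ := (mem_closure_iff.mp huC) _ (hO₁.preimage continuous_subtype_val
      |>.inter ((hcl (γ + 1) hγ1β).isOpen_compl.preimage continuous_subtype_val)) huV
    -- but every point of coe⁻¹' O is a point of continuity of f|A
    have hwU : (w : X) ∈ U := ⟨w.2, hwV.1⟩
    have hwγ : (w : X) ∈ Xs γ := hUγ hwU
    have hwc : ContinuousWithinAt f (Xs γ) (w : X) := by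
      by_contra hc
      exact hwV.2 (hdisc γ hγβ ⟨hwγ, hc⟩)
    have hsub : A ∩ O ⊆ Xs γ := by
      rintro x ⟨hxA, hxO₁, _⟩
      exact hUγ ⟨hxA, hxO₁⟩
    have hwc' : ContinuousWithinAt f (A ∩ O) (w : X) := hwc.mono hsub
    have hwc'' : ContinuousWithinAt f A (w : X) :=
      (continuousWithinAt_inter (hOopen.mem_nhds ⟨hwV.1, hwV.2⟩)).mp hwc'
    exact hws hwc''
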